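/- Let d₁, d₂ > 0 and let I ⊆ (0,∞) be an open interval such that sin(ℓd₁)·sin(ℓd₂) ≠ 0 for all ℓ ∈ I. Then the function f(ℓ) := ℓ(cot(ℓd₁) + cot(ℓd₂)) is strictly decreasing on I. In particular, for every d > 0 and every ℓ > 0 with sin(ℓd) ≠ 0 one has d/dℓ[ℓ·cot(ℓd)] = (½·sin(2ℓd) − ℓd)/sin²(ℓd) < 0. -/

import Mathlib

open Real

lemma key (d : ℝ) (hd : 0 < d) (ℓ : ℝ) (hℓ : 0 < ℓ) (hs : Real.sin (ℓ * d) ≠ 0) :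
    HasDerivAt (fun t : ℝ => t * Real.cot (t * d))
      ((Real.sin (2 * ℓ * d) / 2 - ℓ * d) / Real.sin (ℓ * d) ^ 2) ℓ := by
  have hsc : HasDerivAt (fun t : ℝ => Real.sin (t * d)) (Real.cos (ℓ * d) * d) ℓ :=
    by simpa [Function.comp_def] using (Real.hasDerivAt_sin (ℓ * d)).comp ℓ ((hasDerivAt_id ℓ).mul_const d)
  have hcc : HasDerivAt (fun t : ℝ => Real.cos (t * d)) (-Real.sin (ℓ * d) * d) ℓ :=
    by simpa [Function.comp_def] using (Real.hasDerivAt_cos (ℓ * d)).comp ℓ ((hasDerivAt_id ℓ).mul_const d)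
  have hdiv := hcc.div hsc hs
  have h := (hasDerivAt_id ℓ).mul hdiv
  have heq : (fun t : ℝ => t * Real.cot (t * d))
      = fun t : ℝ => id t * (Real.cos (t * d) / Real.sin (t * d)) := by
    funext t; simp [Real.cot_eq_cos_div_sin]
  rw [heq]
  refine h.congr_deriv ?_
  simp only [Pi.div_apply, id]
  have hpy := Real.sin_sq_add_cos_sq (ℓ * d)
  have h2 : Real.sin (2 * ℓ * d) = 2 * Real.sin (ℓ * d) * Real.cos (ℓ * d) := by
    rw [mul_assoc, Real.sin_two_mul]
  have hnum : -Real.sin (ℓ * d) * d * Real.sin (ℓ * d) - Real.cos (ℓ * d) * (Real.cos (ℓ * d) * d)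
      = -d := by linear_combination (-d) * hpy
  rw [h2, hnum]
  field_simp
  ring

theorem spectral_function_strictAnti
    (d₁ d₂ : ℝ) (hd₁ : 0 < d₁) (hd₂ : 0 < d₂) (lo hi : ℝ)
    (hsub : Set.Ioo lo hi ⊆ Set.Ioi (0 : ℝ))
    (hsin : ∀ ℓ ∈ Set.Ioo lo hi, Real.sin (ℓ * d₁) * Real.sin (ℓ * d₂) ≠ 0) :
    StrictAntiOn (fun ℓ : ℝ => ℓ * (Real.cot (ℓ * d₁) + Real.cot (ℓ * d₂)))
      (Set.Ioo lo hi) ∧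
    ∀ d : ℝ, 0 < d → ∀ ℓ : ℝ, 0 < ℓ → Real.sin (ℓ * d) ≠ 0 →
      HasDerivAt (fun t : ℝ => t * Real.cot (t * d))
        ((Real.sin (2 * ℓ * d) / 2 - ℓ * d) / Real.sin (ℓ * d) ^ 2) ℓ ∧
      (Real.sin (2 * ℓ * d) / 2 - ℓ * d) / Real.sin (ℓ * d) ^ 2 < 0 := by
  have neg : ∀ d : ℝ, 0 < d → ∀ ℓ : ℝ, 0 < ℓ → Real.sin (ℓ * d) ≠ 0 →
      (Real.sin (2 * ℓ * d) / 2 - ℓ * d) / Real.sin (ℓ * d) ^ 2 < 0 := by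
    intro d hd ℓ hℓ hs
    apply div_neg_of_neg_of_pos
    · have := Real.sin_lt (x := 2 * ℓ * d) (by positivity)
      linarith
    · positivity
  constructor
  · have heq : (fun ℓ : ℝ => ℓ * (Real.cot (ℓ * d₁) + Real.cot (ℓ * d₂)))
        = fun ℓ : ℝ => ℓ * Real.cot (ℓ * d₁) + ℓ * Real.cot (ℓ * d₂) := by
      funext t; ring
    rw [heq]
    apply strictAntiOn_of_deriv_neg (convex_Ioo lo hi)
    · intro x hx
      have hx0 := hsub hx
      have h1 : Real.sin (x * d₁) ≠ 0 := fun h => hsin x hx (by rw [h]; ring)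
      have h2 : Real.sin (x * d₂) ≠ 0 := fun h => hsin x hx (by rw [h]; ring)
      exact ((key d₁ hd₁ x hx0 h1).add (key d₂ hd₂ x hx0 h2)).continuousAt.continuousWithinAt
    · intro x hx
      rw [interior_Ioo] at hx
      have hx0 := hsub hx
      have h1 : Real.sin (x * d₁) ≠ 0 := fun h => hsin x hx (by rw [h]; ring)
      have h2 : Real.sin (x * d₂) ≠ 0 := fun h => hsin x hx (by rw [h]; ring)
      rw [((key d₁ hd₁ x hx0 h1).fun_add (key d₂ hd₂ x hx0 h2)).deriv]
      have := neg d₁ hd₁ x hx0 h1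
      have := neg d₂ hd₂ x hx0 h2
      linarith
  · intro d hd ℓ hℓ hs
    exact ⟨key d hd ℓ hℓ hs, neg d hd ℓ hℓ hs⟩
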